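/- Let x ∈ ℝ⁹ with x₁ ≥ ⋯ ≥ x₉ > 0 such that L₁(x) = [[2x₉, x₈−x₁, x₆−x₂],[x₈−x₁, 2x₇, x₅−x₃],[x₆−x₂, x₅−x₃, 2x₄]] is positive semidefinite and det L₁(x) = 0. Then (x₁−x₈)² − 4x₇x₉ + (x₁−x₈)(x₂−x₆) + 2x₉(x₃−x₅) ≥ 0. -/

import Mathlib

/-- The Hildebrand matrix `L₁` built from a vector `x ∈ ℝ⁹` (indices `x 0, …, x 8`
correspond to `x₁, …, x₉`). -/
def L1 (x : Fin 9 → ℝ) : Matrix (Fin 3) (Fin 3) ℝ :=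
  !![2 * x 8, x 7 - x 0, x 5 - x 1;
     x 7 - x 0, 2 * x 6, x 4 - x 2;
     x 5 - x 1, x 4 - x 2, 2 * x 3]

lemma aux_hildebrand (a b c p q r : ℝ) (hab : b ≤ a) (hbc : c ≤ b) (hc : 0 ≤ c)
    (hpq : q ≤ p) (hqr : r ≤ q) (hr : 0 < r)
    (m1 : a^2 ≤ 4*q*r)
    (hdet : 4*p*q*r = p*a^2 + q*b^2 + r*c^2 + a*b*c) :
    0 ≤ a^2 + a*b + 2*r*c - 4*q*r := by
  nlinarith [mul_nonneg (sub_nonneg.2 hab) (sub_nonneg.2 hbc),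
    mul_nonneg hc (sub_nonneg.2 hpq), mul_nonneg (sub_nonneg.2 hab) hc,
    mul_nonneg (sub_nonneg.2 hpq) (sub_nonneg.2 hqr), sq_nonneg (a-c),
    sq_nonneg (b-c), mul_pos (hr.trans_le hqr) hr, hr.le,
    sub_nonneg.2 hqr, sub_nonneg.2 hpq]

/-- If `x₁ ≥ ⋯ ≥ x₉ > 0`, `L₁(x)` is positive semidefinite and `det L₁(x) = 0`, then
`(x₁−x₈)² − 4x₇x₉ + (x₁−x₈)(x₂−x₆) + 2x₉(x₃−x₅) ≥ 0`. -/
theorem L1_boundary_ineq_det45 (x : Fin 9 → ℝ)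
    (hsort : ∀ i j : Fin 9, i ≤ j → x j ≤ x i)
    (hpos : ∀ i, 0 < x i)
    (hL1 : (L1 x).PosSemidef)
    (hdet : (L1 x).det = 0) :
    (x 0 - x 7) ^ 2 - 4 * x 6 * x 8 + (x 0 - x 7) * (x 1 - x 5) +
      2 * x 8 * (x 2 - x 4) ≥ 0 := by
  -- quadratic form at (2 x 6, x 0 - x 7, 0) yields the 2×2 minor inequality
  have hq1 := hL1.dotProduct_mulVec_nonneg ![2 * x 6, x 0 - x 7, 0]
  simp only [L1, Matrix.mulVec, dotProduct, Fin.sum_univ_three,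
    Matrix.cons_val_zero, Matrix.cons_val_one, Matrix.head_cons,
    Matrix.cons_val_two, Matrix.tail_cons, Matrix.cons_val', Matrix.empty_val',
    Matrix.cons_val_fin_one, Matrix.head_fin_const, Pi.star_apply, star_trivial,
    Matrix.of_apply] at hq1
  have hdet' : (L1 x).det =
      8 * x 8 * x 6 * x 3 - 2 * x 8 * (x 2 - x 4)^2 - 2 * x 3 * (x 0 - x 7)^2
        - 2 * x 6 * (x 1 - x 5)^2 - 2 * (x 0 - x 7) * (x 1 - x 5) * (x 2 - x 4) := by
    simp [L1, Matrix.det_fin_three]; ring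
  rw [hdet'] at hdet
  have h06 : 0 < x 6 := hpos 6
  have hab : x 1 - x 5 ≤ x 0 - x 7 := by
    have h1 := hsort 0 1 (by decide)
    have h2 := hsort 5 7 (by decide)
    linarith
  have hbc : x 2 - x 4 ≤ x 1 - x 5 := by
    have h1 := hsort 1 2 (by decide)
    have h2 := hsort 4 5 (by decide)
    linarith
  have hc0 : 0 ≤ x 2 - x 4 := by
    have := hsort 2 4 (by decide); linarith
  have hpq : x 6 ≤ x 3 := hsort 3 6 (by decide)
  have hqr : x 8 ≤ x 6 := hsort 6 8 (by decide)
  have hr : 0 < x 8 := hpos 8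
  have m1 : (x 0 - x 7)^2 ≤ 4 * x 6 * x 8 := by nlinarith [hq1, h06]
  have hdet2 : 4 * (x 3) * (x 6) * (x 8)
      = (x 3) * (x 0 - x 7)^2 + (x 6) * (x 1 - x 5)^2 + (x 8) * (x 2 - x 4)^2
        + (x 0 - x 7)*(x 1 - x 5)*(x 2 - x 4) := by linarith
  have := aux_hildebrand (x 0 - x 7) (x 1 - x 5) (x 2 - x 4) (x 3) (x 6) (x 8)
    hab hbc hc0 hpq hqr hr m1 hdet2
  linarith
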